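/- Let C be the W-characteristic set of ⟨P⟩. Then for every i with 0 ≤ i ≤ n, the ordered set C^{⟨0,…,i⟩} is the W-characteristic set of the (n−i)th elimination ideal ⟨P⟩ ∩ k[x_1,…,x_i] of ⟨P⟩. -/

import Mathlib

open MvPolynomial

namespace CharSets

variable {n : ℕ} {K : Type*} [Field K]

/-- The coefficient of `x_i ^ d` in `F`, as a polynomial in the remaining variables. -/
noncomputable def coefv (i : Fin n) (d : ℕ) (F : MvPolynomial (Fin n) K) :
    MvPolynomial (Fin n) K :=
  ∑ m ∈ F.support.filter (fun m => m i = d), monomial (Finsupp.erase i m) (F.coeff m)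

/-- The leading coefficient of `F` with respect to the variable `x_i`. -/
noncomputable def lcv (i : Fin n) (F : MvPolynomial (Fin n) K) : MvPolynomial (Fin n) K :=
  coefv i (F.degreeOf i) F

/-- Auxiliary pseudo-division: computes (pseudo-quotient, pseudo-remainder) pairs,
with the first argument as fuel; the total power of the leading coefficient used is
exactly the fuel, so that starting with fuel `max(l - m + 1, 0)` yields the pair
`(Q, R)` of the unique representation `lc(F,x_i)^q • G = Q*F + R` with
`q = max(l - m + 1, 0)` and `deg(R, x_i) < deg(F, x_i)`. -/
noncomputable def pdivAux (i : Fin n) (F : MvPolynomial (Fin n) K) :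
    ℕ → MvPolynomial (Fin n) K × MvPolynomial (Fin n) K →
      MvPolynomial (Fin n) K × MvPolynomial (Fin n) K
  | 0, QR => QR
  | q + 1, QR =>
    if (QR.2).degreeOf i < F.degreeOf i then
      (lcv i F ^ (q + 1) * QR.1, lcv i F ^ (q + 1) * QR.2)
    else
      pdivAux i F q
        (lcv i F * QR.1 +
            coefv i ((QR.2).degreeOf i) QR.2 * X i ^ ((QR.2).degreeOf i - F.degreeOf i),
          lcv i F * QR.2 -
            coefv i ((QR.2).degreeOf i) QR.2 * X i ^ ((QR.2).degreeOf i - F.degreeOf i) * F)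

/-- The pseudo-remainder `prem(G, F, x_i)`. -/
noncomputable def prem (G F : MvPolynomial (Fin n) K) (i : Fin n) : MvPolynomial (Fin n) K :=
  (pdivAux i F (G.degreeOf i + 1 - F.degreeOf i) (0, G)).2

/-- The pseudo-quotient `pquo(G, F, x_i)`. -/
noncomputable def pquo (G F : MvPolynomial (Fin n) K) (i : Fin n) : MvPolynomial (Fin n) K :=
  (pdivAux i F (G.degreeOf i + 1 - F.degreeOf i) (0, G)).1

/-- The class of `P`: the largest index (1-based) of a variable actually occurring in `P`;
the class of a constant is `0`. -/
noncomputable def cls (P : MvPolynomial (Fin n) K) : ℕ :=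
  P.vars.sup fun i => (i : ℕ) + 1

/-- The degree of `G` in the leading variable of `P` (`0` if `P` is constant). -/
noncomputable def degLv (G P : MvPolynomial (Fin n) K) : ℕ :=
  if h : P.vars.Nonempty then G.degreeOf (P.vars.max' h) else 0

/-- `G` is R-reduced with respect to `P`, i.e. `deg(G, lv(P)) < deg(P, lv(P))`. -/
def RReduced (G P : MvPolynomial (Fin n) K) : Prop :=
  degLv G P < degLv P P

/-- The initial of `P`: its leading coefficient w.r.t. its leading variable. -/
noncomputable def ini (P : MvPolynomial (Fin n) K) : MvPolynomial (Fin n) K :=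
  if h : P.vars.Nonempty then lcv (P.vars.max' h) P else P

/-- Pseudo-remainder of `G` w.r.t. `F` in the leading variable of `F`
(in case `F` is constant, `m = 0` and the pseudo-remainder is `0`). -/
noncomputable def premLv (G F : MvPolynomial (Fin n) K) : MvPolynomial (Fin n) K :=
  if h : F.vars.Nonempty then prem G F (F.vars.max' h) else 0

/-- Pseudo-quotient of `G` w.r.t. `F` in the leading variable of `F`. -/
noncomputable def pquoLv (G F : MvPolynomial (Fin n) K) : MvPolynomial (Fin n) K :=
  if h : F.vars.Nonempty then pquo G F (F.vars.max' h) else 0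

/-- Iterated pseudo-remainder with respect to a triangular set `[T_1, …, T_r]`:
`prem(P, T) = prem(⋯prem(P, T_r, lv(T_r)), …, T_1, lv(T_1))`. -/
noncomputable def premTS (P : MvPolynomial (Fin n) K) (L : List (MvPolynomial (Fin n) K)) :
    MvPolynomial (Fin n) K :=
  L.foldr (fun T acc => premLv acc T) P

/-- The Sylvester matrix of `F` and `G` with respect to the variable `x_i`. -/
noncomputable def sylvester (i : Fin n) (F G : MvPolynomial (Fin n) K) :
    Matrix (Fin (G.degreeOf i + F.degreeOf i)) (Fin (G.degreeOf i + F.degreeOf i))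
      (MvPolynomial (Fin n) K) :=
  Matrix.of fun r c =>
    if (r : ℕ) < G.degreeOf i then
      if (r : ℕ) ≤ (c : ℕ) ∧ (c : ℕ) ≤ (r : ℕ) + F.degreeOf i then
        coefv i (F.degreeOf i + (r : ℕ) - (c : ℕ)) F
      else 0
    else
      if (r : ℕ) - G.degreeOf i ≤ (c : ℕ) ∧ (c : ℕ) ≤ (r : ℕ) then
        coefv i (G.degreeOf i + ((r : ℕ) - G.degreeOf i) - (c : ℕ)) G
      else 0

/-- The resultant `res(F, G, x_i)` of `F` and `G` w.r.t. `x_i`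
(the determinant of the Sylvester matrix). -/
noncomputable def resv (F G : MvPolynomial (Fin n) K) (i : Fin n) : MvPolynomial (Fin n) K :=
  (sylvester i F G).det

/-- Resultant of `F` and `G` w.r.t. the leading variable of `G`. -/
noncomputable def resLv (F G : MvPolynomial (Fin n) K) : MvPolynomial (Fin n) K :=
  if h : G.vars.Nonempty then resv F G (G.vars.max' h) else F

/-- Iterated resultant with respect to a triangular set:
`res(F, T) = res(⋯res(F, T_r, lv(T_r)), …, T_1, lv(T_1))`. -/
noncomputable def resTS (F : MvPolynomial (Fin n) K) (L : List (MvPolynomial (Fin n) K)) :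
    MvPolynomial (Fin n) K :=
  L.foldr (fun T acc => resLv acc T) F

/-- A triangular set: a nonempty ordered set of nonconstant polynomials with
strictly increasing classes. -/
def TriangularSet (L : List (MvPolynomial (Fin n) K)) : Prop :=
  L ≠ [] ∧ (∀ T ∈ L, 0 < cls T) ∧ L.Chain' fun A B => cls A < cls B

/-- An ascending set: either a single nonzero constant, or a triangular set in which
every later element is R-reduced with respect to every earlier one. -/
def AscendingSet (L : List (MvPolynomial (Fin n) K)) : Prop :=
  (∃ a : K, a ≠ 0 ∧ L = [MvPolynomial.C a]) ∨
    (TriangularSet L ∧ L.Pairwise fun A B => RReduced B A)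

/-- `F` has lower rank than `G`. -/
def rkLT (F G : MvPolynomial (Fin n) K) : Prop :=
  cls F < cls G ∨ (cls F = cls G ∧ 0 < cls F ∧ degLv F F < degLv G G)

/-- `F` and `G` have the same rank: neither has lower rank than the other. -/
def rkEQ (F G : MvPolynomial (Fin n) K) : Prop :=
  ¬ rkLT F G ∧ ¬ rkLT G F

/-- `B` has lower rank than `A` (as ascending sets). -/
def ascLT (B A : List (MvPolynomial (Fin n) K)) : Prop :=
  (∃ j, j < min A.length B.length ∧
      (∀ i, i < j → rkEQ (A.getD i 0) (B.getD i 0)) ∧ rkLT (B.getD j 0) (A.getD j 0)) ∨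
    (A.length < B.length ∧ ∀ i, i < A.length → rkEQ (A.getD i 0) (B.getD i 0))

/-- A Ritt characteristic set of the ideal `I`: an ascending set contained in `I`
of minimal rank among all ascending sets contained in `I`. -/
def RittCharSet (I : Ideal (MvPolynomial (Fin n) K)) (A : List (MvPolynomial (Fin n) K)) :
    Prop :=
  AscendingSet A ∧ (∀ a ∈ A, a ∈ I) ∧
    ∀ B : List (MvPolynomial (Fin n) K), AscendingSet B → (∀ b ∈ B, b ∈ I) → ¬ ascLT B A

/-- The saturated ideal of a triangular set, as a set of polynomials. -/
def satTS (L : List (MvPolynomial (Fin n) K)) : Set (MvPolynomial (Fin n) K) :=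
  {F | ∃ q : ℕ, 0 < q ∧ (L.map ini).prod ^ q * F ∈ Ideal.span {T | T ∈ L}}

/-- A regular set: a triangular set such that `res(ini(T_j), [T_1, …, T_{j-1}]) ≠ 0`
for `j = 2, …, r`. -/
def RegularSet (L : List (MvPolynomial (Fin n) K)) : Prop :=
  TriangularSet L ∧
    ∀ j : ℕ, 0 < j → j < L.length → resTS (ini (L.getD j 0)) (L.take j) ≠ 0

/-- A normal triangular set: `deg(ini(T_j), lv(T_i)) = 0` for all `i < j`. -/
def NormalSet (L : List (MvPolynomial (Fin n) K)) : Prop :=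
  TriangularSet L ∧ L.Pairwise fun A B => degLv (ini B) A = 0

/-- The purely lexicographical order on monomials determined by `x_1 < ⋯ < x_n`. -/
def plexLT (a b : Fin n →₀ ℕ) : Prop :=
  ∃ k : Fin n, a k < b k ∧ ∀ j : Fin n, k < j → a j = b j

/-- `m` is the leading monomial of `P` w.r.t. the plex order. -/
def IsLpp (P : MvPolynomial (Fin n) K) (m : Fin n →₀ ℕ) : Prop :=
  m ∈ P.support ∧ ∀ m' ∈ P.support, m' ≠ m → plexLT m' m

/-- `G` is the reduced (Buchberger–)Gröbner basis of the ideal `I` w.r.t. the plex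
term order determined by `x_1 < ⋯ < x_n`: its elements are nonzero monic members of `I`,
the leading monomial of every nonzero member of `I` is divisible by the leading monomial
of some element of `G`, every element of `G` is B-reduced w.r.t. the others, and `G`
generates `I`. -/
def IsReducedGB (I : Ideal (MvPolynomial (Fin n) K)) (G : Finset (MvPolynomial (Fin n) K)) :
    Prop :=
  (∀ g ∈ G, g ∈ I ∧ g ≠ 0 ∧ ∀ m, IsLpp g m → g.coeff m = 1) ∧
    (∀ F ∈ I, F ≠ 0 → ∃ g ∈ G, ∃ mg mF, IsLpp g mg ∧ IsLpp F mF ∧ mg ≤ mF) ∧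
    (∀ g ∈ G, ∀ g' ∈ G, g' ≠ g → ∀ m ∈ g.support, ∀ m', IsLpp g' m' → ¬ m' ≤ m) ∧
    Ideal.span (G : Set (MvPolynomial (Fin n) K)) = I

/-- `Cs` is the W-characteristic set of `I`: the minimal triangular set contained in the
reduced plex Gröbner basis `G` of `I`, i.e. for each class realized in `G`, `Cs` contains
the element of that class whose leading monomial is minimal w.r.t. the plex order, the
elements being ordered by increasing class (equivalently, by the plex order). -/
def IsWCharSet (I : Ideal (MvPolynomial (Fin n) K)) (Cs : List (MvPolynomial (Fin n) K)) :
    Prop :=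
  ∃ G : Finset (MvPolynomial (Fin n) K), IsReducedGB I G ∧
    (Cs.Chain' fun A B => cls A < cls B) ∧
    (∀ c ∈ Cs, c ∈ G) ∧
    (∀ g ∈ G, ∃ c ∈ Cs, cls c = cls g) ∧
    ∀ c ∈ Cs, ∀ g ∈ G, cls g = cls c → g ≠ c →
      ∃ mc mg, IsLpp c mc ∧ IsLpp g mg ∧ plexLT mc mg

/-- The set of common zeros of a set `S` of polynomials over `k`, taken in `Kc ^ n`
for an extension `Kc` of `k`. -/
def zeroSet {k : Type*} [Field k] (Kc : Type*) [CommRing Kc] [Algebra k Kc]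
    (S : Set (MvPolynomial (Fin n) k)) : Set (Fin n → Kc) :=
  {a | ∀ p ∈ S, MvPolynomial.aeval a p = 0}


section PlexBasics

theorem plexLT_trans {a b c : Fin n →₀ ℕ} (h1 : plexLT a b) (h2 : plexLT b c) : plexLT a c := by
  obtain ⟨k1, hk1, he1⟩ := h1
  obtain ⟨k2, hk2, he2⟩ := h2
  rcases lt_trichotomy k1 k2 with h | h | h
  · exact ⟨k2, by rw [he1 k2 h]; exact hk2, fun j hj => (he1 j (h.trans hj)).trans (he2 j hj)⟩
  · subst h; exact ⟨k1, hk1.trans hk2, fun j hj => (he1 j hj).trans (he2 j hj)⟩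
  · exact ⟨k1, by rw [← he2 k1 h]; exact hk1, fun j hj => (he1 j hj).trans (he2 j (h.trans hj))⟩

theorem plexLT_irrefl (a : Fin n →₀ ℕ) : ¬ plexLT a a := by
  rintro ⟨k, hk, -⟩; exact lt_irrefl _ hk

theorem plexLT_asymm {a b : Fin n →₀ ℕ} (h : plexLT a b) : ¬ plexLT b a :=
  fun h' => plexLT_irrefl a (plexLT_trans h h')

theorem plexLT_total {a b : Fin n →₀ ℕ} (h : a ≠ b) : plexLT a b ∨ plexLT b a := by
  classical
  have hne : ((a.support ∪ b.support).filter fun j => a j ≠ b j).Nonempty := by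
    rw [Finset.filter_nonempty_iff]
    obtain ⟨j, hj⟩ := Finsupp.ne_iff.mp h
    refine ⟨j, ?_, hj⟩
    rcases eq_or_ne (a j) 0 with h0 | h0
    · exact Finset.mem_union_right _ (Finsupp.mem_support_iff.mpr (by rw [← h0]; exact hj.symm))
    · exact Finset.mem_union_left _ (Finsupp.mem_support_iff.mpr h0)
  set s := (a.support ∪ b.support).filter fun j => a j ≠ b j with hs
  have hk := s.max'_mem hne
  set k := s.max' hne with hkdef
  rw [hs, Finset.mem_filter] at hk
  have heq : ∀ j : Fin n, k < j → a j = b j := by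
    intro j hj
    by_contra hne'
    have hjs : j ∈ s := by
      rw [hs, Finset.mem_filter]
      refine ⟨?_, hne'⟩
      rcases eq_or_ne (a j) 0 with h0 | h0
      · exact Finset.mem_union_right _ (Finsupp.mem_support_iff.mpr (by rw [← h0]; exact (Ne.symm hne')))
      · exact Finset.mem_union_left _ (Finsupp.mem_support_iff.mpr h0)
    exact absurd (Finset.le_max' s j hjs) (not_le.mpr hj)
  rcases lt_or_gt_of_ne hk.2 with h' | h'
  · exact Or.inl ⟨k, h', heq⟩
  · exact Or.inr ⟨k, h', fun j hj => (heq j hj).symm⟩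

theorem plexLT_add_left (c : Fin n →₀ ℕ) {a b : Fin n →₀ ℕ} (h : plexLT a b) :
    plexLT (c + a) (c + b) := by
  obtain ⟨k, hk, he⟩ := h
  refine ⟨k, ?_, fun j hj => ?_⟩
  · simpa [Finsupp.add_apply] using Nat.add_lt_add_left hk (c k)
  · simp [Finsupp.add_apply, he j hj]

theorem plexLT_wf : WellFounded (@plexLT n) := by
  have hsub : Subrelation (@plexLT n) (Finsupp.Lex (fun j k : Fin n => k < j) (· < ·)) := by
    rintro a b ⟨k, h1, h2⟩; exact ⟨k, fun j hj => h2 j hj, h1⟩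
  haveI : IsTrichotomous (Fin n) (fun j k : Fin n => k < j) :=
    ⟨fun a b => by
      intro h1 h2
      exact le_antisymm (not_lt.mp h1) (not_lt.mp h2)⟩
  exact hsub.wf (Finsupp.Lex.wellFounded' (fun m => Nat.not_lt_zero m) (wellFounded_lt)
    (wellFounded_lt : WellFounded ((· < ·) : Fin n → Fin n → Prop)))

theorem exists_plex_max (s : Finset (Fin n →₀ ℕ)) (hs : s.Nonempty) :
    ∃ m ∈ s, ∀ m' ∈ s, m' ≠ m → plexLT m' m := by
  classical
  induction s using Finset.induction_on with
  | empty => exact absurd hs (by simp)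
  | @insert a s ha ih =>
    rcases s.eq_empty_or_nonempty with rfl | hne
    · exact ⟨a, Finset.mem_insert_self a _, fun m' hm' hne' => by
        simp only [insert_empty_eq, Finset.mem_singleton] at hm'; exact absurd hm' hne'⟩
    · obtain ⟨m, hm, hmax⟩ := ih hne
      have ham : a ≠ m := fun h => ha (h ▸ hm)
      rcases plexLT_total ham with h | h
      · refine ⟨m, Finset.mem_insert_of_mem hm, fun m' hm' hne' => ?_⟩
        rcases Finset.mem_insert.mp hm' with rfl | hm's
        · exact h
        · exact hmax m' hm's hne'
      · refine ⟨a, Finset.mem_insert_self a _, fun m' hm' hne' => ?_⟩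
        rcases Finset.mem_insert.mp hm' with rfl | hm's
        · exact absurd rfl hne'
        · rcases eq_or_ne m' m with rfl | hm'm
          · exact h
          · exact plexLT_trans (hmax m' hm's hm'm) h

theorem exists_isLpp {p : MvPolynomial (Fin n) K} (hp : p ≠ 0) : ∃ m, IsLpp p m := by
  obtain ⟨m, hm, hmax⟩ := exists_plex_max p.support
    (by rwa [Finset.nonempty_iff_ne_empty, ne_eq, MvPolynomial.support_eq_empty])
  exact ⟨m, hm, hmax⟩

theorem isLpp_unique {p : MvPolynomial (Fin n) K} {m m' : Fin n →₀ ℕ}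
    (h : IsLpp p m) (h' : IsLpp p m') : m = m' := by
  by_contra hne
  exact plexLT_asymm (h'.2 m h.1 hne) (h.2 m' h'.1 (Ne.symm hne))

theorem ne_zero_of_isLpp {p : MvPolynomial (Fin n) K} {m : Fin n →₀ ℕ} (h : IsLpp p m) :
    p ≠ 0 := by
  intro h0
  rw [h0] at h
  simpa using h.1

end PlexBasics

section Reduction

theorem support_reduce {F g : MvPolynomial (Fin n) K} {m mg : Fin n →₀ ℕ}
    (hF : IsLpp F m) (hg : IsLpp g mg) (hmonic : g.coeff mg = 1) (hle : mg ≤ m) :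
    ∀ m' ∈ (F - monomial (m - mg) (F.coeff m) * g).support, plexLT m' m := by
  intro m' hm'
  rw [MvPolynomial.mem_support_iff, MvPolynomial.coeff_sub, coeff_monomial_mul'] at hm'
  by_cases hmm : m' = m
  · subst hmm
    rw [if_pos tsub_le_self, tsub_tsub_cancel_of_le hle, hmonic, mul_one, sub_self] at hm'
    exact absurd rfl hm'
  · by_cases hF' : F.coeff m' = 0
    · rw [hF', zero_sub, neg_ne_zero] at hm'
      split_ifs at hm' with hd
      · have hg0 : g.coeff (m' - (m - mg)) ≠ 0 := right_ne_zero_of_mul hm'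
        have hm'eq : (m' - (m - mg)) + (m - mg) = m' := tsub_add_cancel_of_le hd
        have hmgm : (m - mg) + mg = m := tsub_add_cancel_of_le hle
        rcases eq_or_ne (m' - (m - mg)) mg with heq | hne
        · rw [heq] at hm'eq
          exact absurd (by rw [← hm'eq, add_comm, hmgm]) hmm
        · have := plexLT_add_left (m - mg) (hg.2 _ (MvPolynomial.mem_support_iff.mpr hg0) hne)
          rwa [add_comm (m - mg) (m' - (m - mg)), hm'eq, hmgm] at this
      · exact absurd rfl hm'
    · exact hF.2 m' (MvPolynomial.mem_support_iff.mpr hF') hmm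

theorem mem_span_of_gb_conds (J : Ideal (MvPolynomial (Fin n) K))
    (S : Finset (MvPolynomial (Fin n) K))
    (h1 : ∀ g ∈ S, g ∈ J ∧ g ≠ 0 ∧ ∀ m, IsLpp g m → g.coeff m = 1)
    (h2 : ∀ F ∈ J, F ≠ 0 → ∃ g ∈ S, ∃ mg mF, IsLpp g mg ∧ IsLpp F mF ∧ mg ≤ mF)
    (m1 : Fin n →₀ ℕ) :
    ∀ F : MvPolynomial (Fin n) K, F ∈ J → IsLpp F m1 →
      F ∈ Ideal.span (S : Set (MvPolynomial (Fin n) K)) := by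
  refine plexLT_wf.induction
    (C := fun mm => ∀ F : MvPolynomial (Fin n) K, F ∈ J → IsLpp F mm →
      F ∈ Ideal.span (S : Set (MvPolynomial (Fin n) K))) m1 ?_
  intro m IH F hFJ hlpp
  obtain ⟨g, hgS, mg, mF, hlg, hlF, hle⟩ := h2 F hFJ (ne_zero_of_isLpp hlpp)
  have hmF : mF = m := isLpp_unique hlF hlpp
  rw [hmF] at hlF hle
  have hmonic := (h1 g hgS).2.2 mg hlg
  have hgspan : monomial (m - mg) (F.coeff m) * g ∈ Ideal.span (S : Set (MvPolynomial (Fin n) K)) :=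
    Ideal.mul_mem_left _ _ (Ideal.subset_span hgS)
  have hsupp := support_reduce hlpp hlg hmonic hle
  have hFsum : F = (F - monomial (m - mg) (F.coeff m) * g) + monomial (m - mg) (F.coeff m) * g :=
    (sub_add_cancel _ _).symm
  by_cases h0 : F - monomial (m - mg) (F.coeff m) * g = 0
  · rw [hFsum, h0, zero_add]; exact hgspan
  · obtain ⟨m2, hm2⟩ := exists_isLpp h0
    have hlt : plexLT m2 m := hsupp m2 hm2.1
    have hF'J : F - monomial (m - mg) (F.coeff m) * g ∈ J :=
      Ideal.sub_mem _ hFJ (Ideal.mul_mem_left _ _ (h1 g hgS).1)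
    have := IH m2 hlt _ hF'J hm2
    rw [hFsum]
    exact Ideal.add_mem _ this hgspan

theorem mem_span_of_gb_conds' (J : Ideal (MvPolynomial (Fin n) K))
    (S : Finset (MvPolynomial (Fin n) K))
    (h1 : ∀ g ∈ S, g ∈ J ∧ g ≠ 0 ∧ ∀ m, IsLpp g m → g.coeff m = 1)
    (h2 : ∀ F ∈ J, F ≠ 0 → ∃ g ∈ S, ∃ mg mF, IsLpp g mg ∧ IsLpp F mF ∧ mg ≤ mF)
    {F : MvPolynomial (Fin n) K} (hF : F ∈ J) :
    F ∈ Ideal.span (S : Set (MvPolynomial (Fin n) K)) := by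
  by_cases h0 : F = 0
  · rw [h0]; exact zero_mem _
  · obtain ⟨m, hm⟩ := exists_isLpp h0
    exact mem_span_of_gb_conds J S h1 h2 m F hF hm

end Reduction

section Transfer

variable {i : ℕ}

theorem mem_range_castLE (hi : i ≤ n) {y : Fin n} :
    y ∈ Set.range (Fin.castLE hi) ↔ (y : ℕ) < i := by
  constructor
  · rintro ⟨j, rfl⟩; exact j.isLt
  · intro h; exact ⟨⟨(y : ℕ), h⟩, by ext; rfl⟩

theorem mapDomain_castLE_le_iff (hi : i ≤ n) {a b : Fin i →₀ ℕ} :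
    Finsupp.mapDomain (Fin.castLE hi) a ≤ Finsupp.mapDomain (Fin.castLE hi) b ↔ a ≤ b := by
  have hinj := Fin.castLE_injective hi
  rw [Finsupp.le_def, Finsupp.le_def]
  constructor
  · intro h j
    have := h (Fin.castLE hi j)
    rwa [Finsupp.mapDomain_apply hinj, Finsupp.mapDomain_apply hinj] at this
  · intro h y
    by_cases hy : y ∈ Set.range (Fin.castLE hi)
    · obtain ⟨j, rfl⟩ := hy
      rw [Finsupp.mapDomain_apply hinj, Finsupp.mapDomain_apply hinj]
      exact h j
    · rw [Finsupp.mapDomain_notin_range _ _ hy, Finsupp.mapDomain_notin_range _ _ hy]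

theorem castLE_lt_castLE {hi : i ≤ n} {a b : Fin i} (h : a < b) :
    Fin.castLE hi a < Fin.castLE hi b := h

theorem plexLT_mapDomain_castLE (hi : i ≤ n) {a b : Fin i →₀ ℕ} :
    plexLT (Finsupp.mapDomain (Fin.castLE hi) a) (Finsupp.mapDomain (Fin.castLE hi) b) ↔
      plexLT a b := by
  have hinj := Fin.castLE_injective hi
  constructor
  · rintro ⟨k, hk, he⟩
    have hkr : k ∈ Set.range (Fin.castLE hi) := by
      by_contra h
      rw [Finsupp.mapDomain_notin_range _ _ h, Finsupp.mapDomain_notin_range _ _ h] at hk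
      exact lt_irrefl 0 hk
    obtain ⟨k0, rfl⟩ := hkr
    refine ⟨k0, ?_, fun j hj => ?_⟩
    · rwa [Finsupp.mapDomain_apply hinj, Finsupp.mapDomain_apply hinj] at hk
    · have := he (Fin.castLE hi j) (castLE_lt_castLE hj)
      rwa [Finsupp.mapDomain_apply hinj, Finsupp.mapDomain_apply hinj] at this
  · rintro ⟨k, hk, he⟩
    refine ⟨Fin.castLE hi k, by
      rw [Finsupp.mapDomain_apply hinj, Finsupp.mapDomain_apply hinj]; exact hk, ?_⟩
    intro y hy
    by_cases hyr : y ∈ Set.range (Fin.castLE hi)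
    · obtain ⟨j, rfl⟩ := hyr
      rw [Finsupp.mapDomain_apply hinj, Finsupp.mapDomain_apply hinj]
      exact he j hy
    · rw [Finsupp.mapDomain_notin_range _ _ hyr, Finsupp.mapDomain_notin_range _ _ hyr]

theorem isLpp_rename_castLE (hi : i ≤ n) {p : MvPolynomial (Fin i) K} {m : Fin i →₀ ℕ} :
    IsLpp (rename (Fin.castLE hi) p) (Finsupp.mapDomain (Fin.castLE hi) m) ↔ IsLpp p m := by
  classical
  have hinj := Fin.castLE_injective hi
  have hsupp : (rename (Fin.castLE hi) p).support =
      p.support.image (Finsupp.mapDomain (Fin.castLE hi)) :=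
    MvPolynomial.support_rename_of_injective hinj
  have hminj : Function.Injective (Finsupp.mapDomain (M := ℕ) (Fin.castLE hi)) :=
    Finsupp.mapDomain_injective hinj
  constructor
  · rintro ⟨h1, h2⟩
    rw [hsupp, Finset.mem_image] at h1
    obtain ⟨m0, hm0, heq⟩ := h1
    obtain rfl : m0 = m := hminj heq
    refine ⟨hm0, fun m' hm' hne => ?_⟩
    have := h2 (Finsupp.mapDomain (Fin.castLE hi) m')
      (by rw [hsupp]; exact Finset.mem_image_of_mem _ hm') (fun h => hne (hminj h))
    exact (plexLT_mapDomain_castLE hi).mp this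
  · rintro ⟨h1, h2⟩
    refine ⟨by rw [hsupp]; exact Finset.mem_image_of_mem _ h1, ?_⟩
    intro m' hm' hne
    rw [hsupp, Finset.mem_image] at hm'
    obtain ⟨m0, hm0, rfl⟩ := hm'
    exact (plexLT_mapDomain_castLE hi).mpr (h2 m0 hm0 (fun h => hne (by rw [h])))

theorem cls_le_of_fin (p : MvPolynomial (Fin i) K) : cls p ≤ i :=
  Finset.sup_le fun j _ => j.isLt

theorem cls_rename_castLE (hi : i ≤ n) (p : MvPolynomial (Fin i) K) :
    cls (rename (Fin.castLE hi) p) = cls p := by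
  classical
  have hinj := Fin.castLE_injective hi
  unfold cls
  apply le_antisymm
  · apply Finset.sup_le
    intro y hy
    rw [MvPolynomial.mem_vars] at hy
    obtain ⟨d, hd, hyd⟩ := hy
    rw [MvPolynomial.support_rename_of_injective hinj, Finset.mem_image] at hd
    obtain ⟨d0, hd0, rfl⟩ := hd
    have := Finsupp.mapDomain_support hyd
    rw [Finset.mem_image] at this
    obtain ⟨j, hj, rfl⟩ := this
    exact Finset.le_sup (f := fun k : Fin i => (k : ℕ) + 1)
      (MvPolynomial.mem_vars j |>.mpr ⟨d0, hd0, hj⟩)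
  · apply Finset.sup_le
    intro j hj
    rw [MvPolynomial.mem_vars] at hj
    obtain ⟨d, hd, hjd⟩ := hj
    have hy : Fin.castLE hi j ∈ (rename (Fin.castLE hi) p).vars := by
      rw [MvPolynomial.mem_vars]
      refine ⟨Finsupp.mapDomain (Fin.castLE hi) d, ?_, ?_⟩
      · rw [MvPolynomial.support_rename_of_injective hinj]
        exact Finset.mem_image_of_mem _ hd
      · rw [Finsupp.mem_support_iff, Finsupp.mapDomain_apply hinj]
        exact Finsupp.mem_support_iff.mp hjd
    exact Finset.le_sup (f := fun k : Fin n => (k : ℕ) + 1) hy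

theorem coeff_vanish_of_cls_le {g : MvPolynomial (Fin n) K} (h : cls g ≤ i) :
    ∀ m ∈ g.support, ∀ j : Fin n, i ≤ (j : ℕ) → m j = 0 := by
  intro m hm j hj
  by_contra hne
  have hjv : j ∈ g.vars :=
    MvPolynomial.mem_vars j |>.mpr ⟨m, hm, Finsupp.mem_support_iff.mpr hne⟩
  have : (j : ℕ) + 1 ≤ i :=
    le_trans (Finset.le_sup (f := fun k : Fin n => (k : ℕ) + 1) hjv) h
  omega

theorem support_vanish_of_isLpp {g : MvPolynomial (Fin n) K} {mg : Fin n →₀ ℕ}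
    (hl : IsLpp g mg) (h : ∀ j : Fin n, i ≤ (j : ℕ) → mg j = 0) :
    ∀ m ∈ g.support, ∀ j : Fin n, i ≤ (j : ℕ) → m j = 0 := by
  intro m hm j hj
  by_cases hmm : m = mg
  · rw [hmm]; exact h j hj
  · obtain ⟨k, hk, he⟩ := hl.2 m hm hmm
    by_contra h0
    have hjk : j ≤ k := by
      by_contra hlt
      push_neg at hlt
      exact h0 ((he j hlt).trans (h j hj))
    have hik : i ≤ (k : ℕ) := le_trans hj hjk
    rw [h k hik] at hk
    exact Nat.not_lt_zero _ hk

theorem exists_mapDomain_castLE (hi : i ≤ n) {m : Fin n →₀ ℕ}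
    (h : ∀ j : Fin n, i ≤ (j : ℕ) → m j = 0) :
    ∃ m0 : Fin i →₀ ℕ, Finsupp.mapDomain (Fin.castLE hi) m0 = m := by
  have hinj := Fin.castLE_injective hi
  refine ⟨Finsupp.comapDomain _ m hinj.injOn, Finsupp.mapDomain_comapDomain _ hinj m ?_⟩
  intro y hy
  rw [Finset.mem_coe, Finsupp.mem_support_iff] at hy
  rw [mem_range_castLE hi]
  by_contra hlt
  push_neg at hlt
  exact hy (h y hlt)

theorem exists_rename_castLE (hi : i ≤ n) {g : MvPolynomial (Fin n) K}
    (h : ∀ m ∈ g.support, ∀ j : Fin n, i ≤ (j : ℕ) → m j = 0) :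
    ∃ q : MvPolynomial (Fin i) K, rename (Fin.castLE hi) q = g := by
  classical
  have hinj := Fin.castLE_injective hi
  refine ⟨∑ m ∈ g.support,
    monomial (Finsupp.comapDomain (Fin.castLE hi) m hinj.injOn) (g.coeff m), ?_⟩
  rw [map_sum]
  conv_rhs => rw [← MvPolynomial.support_sum_monomial_coeff g]
  refine Finset.sum_congr rfl fun m hm => ?_
  rw [rename_monomial, Finsupp.mapDomain_comapDomain _ hinj m ?_]
  intro y hy
  rw [Finset.mem_coe, Finsupp.mem_support_iff] at hy
  rw [mem_range_castLE hi]
  by_contra hlt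
  push_neg at hlt
  exact hy (h m hm y hlt)

end Transfer


/-- Proposition elimpro. Let `C` be the W-characteristic set of `⟨P⟩`.
For every `0 ≤ i ≤ n`, the ordered set `C^{⟨0,…,i⟩}` (the elements of `C` lying in
`k[x_1, …, x_i]`) is the W-characteristic set of the `(n−i)`-th elimination ideal
`⟨P⟩ ∩ k[x_1, …, x_i]`. -/
theorem statement9 {n : ℕ} {K : Type*} [Field K]
    (P : Finset (MvPolynomial (Fin n) K)) (hne : P.Nonempty) (h0 : ∀ p ∈ P, p ≠ 0)
    (hproper : Ideal.span (P : Set (MvPolynomial (Fin n) K)) ≠ ⊤)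
    (Cs : List (MvPolynomial (Fin n) K))
    (hW : IsWCharSet (Ideal.span (P : Set (MvPolynomial (Fin n) K))) Cs) :
    ∀ i : ℕ, ∀ hi : i ≤ n, ∀ D : List (MvPolynomial (Fin i) K),
      D.map (MvPolynomial.rename (Fin.castLE hi)) = Cs.filter (fun c => cls c ≤ i) →
      IsWCharSet
        (Ideal.comap (MvPolynomial.rename (Fin.castLE hi)).toRingHom
          (Ideal.span (P : Set (MvPolynomial (Fin n) K)))) D := by
  classical
  intro i hi D hD
  obtain ⟨G, hGB, hchain, hCsG, hsur, hmin⟩ := hW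
  obtain ⟨hG1, hG2, hG3, -⟩ := hGB
  have hinj := Fin.castLE_injective hi
  have hrinj : Function.Injective (rename (R := K) (Fin.castLE hi)) :=
    rename_injective _ hinj
  set I := Ideal.span (P : Set (MvPolynomial (Fin n) K)) with hIdef
  set J := Ideal.comap (MvPolynomial.rename (R := K) (Fin.castLE hi)).toRingHom I with hJdef
  have hJmem : ∀ F : MvPolynomial (Fin i) K, F ∈ J ↔ rename (Fin.castLE hi) F ∈ I := by
    intro F
    rw [hJdef, Ideal.mem_comap]
    simp only [AlgHom.toRingHom_eq_coe, RingHom.coe_coe]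
  set G₂ : Finset (MvPolynomial (Fin i) K) :=
    (G.filter fun g => cls g ≤ i).image (killCompl (R := K) hinj) with hG₂def
  have hmem : ∀ q : MvPolynomial (Fin i) K, q ∈ G₂ ↔ rename (Fin.castLE hi) q ∈ G := by
    intro q
    rw [hG₂def]
    simp only [Finset.mem_image, Finset.mem_filter]
    constructor
    · rintro ⟨g, ⟨hg, hcls⟩, rfl⟩
      obtain ⟨q0, rfl⟩ := exists_rename_castLE hi (coeff_vanish_of_cls_le hcls)
      rwa [killCompl_rename_app]
    · intro hq
      exact ⟨rename (Fin.castLE hi) q, ⟨hq, by rw [cls_rename_castLE]; exact cls_le_of_fin q⟩,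
        killCompl_rename_app hinj q⟩
  have hDmem : ∀ d ∈ D, rename (Fin.castLE hi) d ∈ Cs := by
    intro d hd
    have hmem' : rename (Fin.castLE hi) d ∈ Cs.filter (fun c => cls c ≤ i) := by
      rw [← hD]
      exact List.mem_map_of_mem hd
    exact (List.mem_filter.mp hmem').1
  have hcond1 : ∀ q ∈ G₂, q ∈ J ∧ q ≠ 0 ∧ ∀ m, IsLpp q m → q.coeff m = 1 := by
    intro q hq
    have hqG := (hmem q).mp hq
    obtain ⟨hqI, hq0, hqmon⟩ := hG1 _ hqG
    refine ⟨(hJmem q).mpr hqI, ?_, ?_⟩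
    · rintro rfl
      exact hq0 (map_zero _)
    · intro m hm
      have := hqmon _ ((isLpp_rename_castLE hi).mpr hm)
      rwa [coeff_rename_mapDomain _ hinj] at this
  have hcond2 : ∀ F ∈ J, F ≠ 0 → ∃ q ∈ G₂, ∃ mg mF, IsLpp q mg ∧ IsLpp F mF ∧ mg ≤ mF := by
    intro F hFJ hF0
    have hFI : rename (Fin.castLE hi) F ∈ I := (hJmem F).mp hFJ
    have hFne : rename (Fin.castLE hi) F ≠ 0 := fun h => hF0 (hrinj (by rw [h, map_zero]))
    obtain ⟨g, hgG, mg, mF, hlg, hlF, hle⟩ := hG2 _ hFI hFne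
    have hmFsupp := hlF.1
    rw [MvPolynomial.support_rename_of_injective hinj, Finset.mem_image] at hmFsupp
    obtain ⟨m0, hm0, rfl⟩ := hmFsupp
    have hlF0 : IsLpp F m0 := (isLpp_rename_castLE hi).mp hlF
    have hmgv : ∀ j : Fin n, i ≤ (j : ℕ) → mg j = 0 := by
      intro j hj
      have h1 : mg j ≤ Finsupp.mapDomain (Fin.castLE hi) m0 j := Finsupp.le_def.mp hle j
      rw [Finsupp.mapDomain_notin_range _ _
        (fun hr => by rw [mem_range_castLE hi] at hr; omega)] at h1
      omega
    have hgv := support_vanish_of_isLpp hlg hmgv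
    obtain ⟨q, rfl⟩ := exists_rename_castLE hi hgv
    have hqG₂ : q ∈ G₂ := (hmem q).mpr hgG
    obtain ⟨mg0, rfl⟩ := exists_mapDomain_castLE hi hmgv
    exact ⟨q, hqG₂, mg0, m0, (isLpp_rename_castLE hi).mp hlg, hlF0,
      (mapDomain_castLE_le_iff hi).mp hle⟩
  refine ⟨G₂, ⟨hcond1, hcond2, ?_, ?_⟩, ?_, ?_, ?_, ?_⟩
  · -- B-reducedness
    intro q hq q' hq' hne m hm m' hm' hle
    have h := hG3 _ ((hmem q).mp hq) _ ((hmem q').mp hq') (fun h => hne (hrinj h))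
      (Finsupp.mapDomain (Fin.castLE hi) m)
      (by rw [MvPolynomial.support_rename_of_injective hinj]
          exact Finset.mem_image_of_mem _ hm)
      (Finsupp.mapDomain (Fin.castLE hi) m') ((isLpp_rename_castLE hi).mpr hm')
    exact h ((mapDomain_castLE_le_iff hi).mpr hle)
  · -- span
    apply le_antisymm
    · rw [Ideal.span_le]
      intro q hq
      exact (hcond1 q (Finset.mem_coe.mp hq)).1
    · intro F hF
      exact mem_span_of_gb_conds' J G₂ hcond1 hcond2 hF
  · -- chain
    have h1 : (D.map (rename (R := K) (Fin.castLE hi))).Chain' fun A B => cls A < cls B := by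
      rw [hD]
      haveI : IsTrans (MvPolynomial (Fin n) K) (fun A B => cls A < cls B) :=
        ⟨fun a b c hab hbc => lt_trans hab hbc⟩
      exact hchain.sublist (List.filter_sublist (l := Cs))
    simp only [List.Chain', List.isChain_map] at h1
    exact h1.imp (fun a b h => by rwa [cls_rename_castLE, cls_rename_castLE] at h)
  · -- membership
    intro d hd
    exact (hmem d).mpr (hCsG _ (hDmem d hd))
  · -- class surjectivity
    intro q hq
    obtain ⟨c, hc, hceq⟩ := hsur _ ((hmem q).mp hq)
    have hcls : cls c ≤ i := by
      rw [hceq, cls_rename_castLE]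
      exact cls_le_of_fin q
    have hcf : c ∈ Cs.filter (fun c => cls c ≤ i) :=
      List.mem_filter.mpr ⟨hc, by simpa using hcls⟩
    rw [← hD, List.mem_map] at hcf
    obtain ⟨d, hdD, hdeq⟩ := hcf
    refine ⟨d, hdD, ?_⟩
    have h2 := congrArg cls hdeq
    rw [cls_rename_castLE] at h2
    rw [h2, hceq, cls_rename_castLE]
  · -- minimality
    intro d hd q hq hclseq hneq
    have hdc := hDmem d hd
    have hqG := (hmem q).mp hq
    have hclseq' : cls (rename (Fin.castLE hi) q) = cls (rename (Fin.castLE hi) d) := by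
      rw [cls_rename_castLE, cls_rename_castLE]
      exact hclseq
    obtain ⟨mc, mg, hlc, hlg, hplex⟩ := hmin _ hdc _ hqG hclseq' (fun h => hneq (hrinj h))
    have h1 := hlc.1
    rw [MvPolynomial.support_rename_of_injective hinj, Finset.mem_image] at h1
    obtain ⟨mc0, -, rfl⟩ := h1
    have h2 := hlg.1
    rw [MvPolynomial.support_rename_of_injective hinj, Finset.mem_image] at h2
    obtain ⟨mg0, -, rfl⟩ := h2
    exact ⟨mc0, mg0, (isLpp_rename_castLE hi).mp hlc, (isLpp_rename_castLE hi).mp hlg,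
      (plexLT_mapDomain_castLE hi).mp hplex⟩


end CharSets
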